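/- Let f : [0,T] → ℝ be continuously differentiable and attain its minimum over [0,T] at a point t₀ ∈ (0,T]. Then for every α ∈ (0,1), the Caputo fractional derivative ∂ₜ^α f(t₀) = (1/Γ(1−α)) ∫₀^{t₀} f′(τ) (t₀−τ)^{−α} dτ satisfies ∂ₜ^α f(t₀) ≤ 0. -/

import Mathlib

open Set MeasureTheory Filter

theorem stmt_4 (T : ℝ) (hT : 0 < T) (f f' : ℝ → ℝ)
    (hderiv : ∀ t ∈ Set.Icc 0 T, HasDerivAt f (f' t) t)
    (hf' : ContinuousOn f' (Set.Icc 0 T))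
    (t₀ : ℝ) (ht₀ : t₀ ∈ Set.Ioc 0 T)
    (hmin : ∀ t ∈ Set.Icc 0 T, f t₀ ≤ f t) :
    ∀ α ∈ Set.Ioo (0:ℝ) 1,
      (1 / Real.Gamma (1 - α)) * ∫ τ in (0:ℝ)..t₀, f' τ * (t₀ - τ) ^ (-α) ≤ 0 := by
  intro α hα
  obtain ⟨hα0, hα1⟩ := hα
  obtain ⟨ht0, htT⟩ := ht₀
  have h1α : (0:ℝ) < 1 - α := by linarith
  obtain ⟨C, hC⟩ := isCompact_Icc.exists_bound_of_continuousOn hf'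
  have hC0 : 0 ≤ C := le_trans (norm_nonneg _) (hC 0 ⟨le_refl 0, hT.le⟩)
  have hsub : Icc (0:ℝ) t₀ ⊆ Icc 0 T := Icc_subset_Icc le_rfl htT
  -- integrability of the kernel
  have hint_h : ∀ a b : ℝ, IntervalIntegrable (fun τ => (t₀ - τ) ^ (-α)) volume a b := by
    intro a b
    have h1 : IntervalIntegrable (fun x : ℝ => x ^ (-α)) volume (t₀ - a) (t₀ - b) :=
      intervalIntegral.intervalIntegrable_rpow' (by linarith)
    simpa using h1.comp_sub_left t₀
  -- integrability of the integrand on subintervals of [0, t₀]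
  have hg_int : ∀ a b : ℝ, uIcc a b ⊆ Icc 0 t₀ →
      IntervalIntegrable (fun τ => f' τ * (t₀ - τ) ^ (-α)) volume a b := by
    intro a b hab
    have hIsub : Set.uIoc a b ⊆ Icc 0 t₀ := (Set.uIoc_subset_uIcc).trans hab
    rw [intervalIntegrable_iff]
    have hdom : IntegrableOn (fun τ => C * (t₀ - τ) ^ (-α)) (Set.uIoc a b) volume := by
      rw [← intervalIntegrable_iff]
      exact (hint_h a b).const_mul C
    refine hdom.mono' ?_ ?_
    · have h1 : AEStronglyMeasurable f' (volume.restrict (Set.uIoc a b)) :=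
        (hf'.mono ((hIsub.trans hsub))).aestronglyMeasurable measurableSet_uIoc
      have h2 : AEStronglyMeasurable (fun τ => (t₀ - τ) ^ (-α)) (volume.restrict (Set.uIoc a b)) :=
        ((measurable_const.sub measurable_id).pow_const (-α)).aestronglyMeasurable
      exact h1.mul h2
    · rw [ae_restrict_iff' measurableSet_uIoc]
      filter_upwards with τ hτ
      have hτ' := hIsub hτ
      have hk : 0 ≤ (t₀ - τ) ^ (-α) := Real.rpow_nonneg (by linarith [hτ'.2]) _
      rw [norm_mul, Real.norm_eq_abs, Real.norm_eq_abs, abs_of_nonneg hk]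
      exact mul_le_mul_of_nonneg_right (hC τ (hsub hτ')) hk
  -- value of the kernel integral
  have hker : ∀ s : ℝ, s < t₀ →
      (∫ τ in s..t₀, (t₀ - τ) ^ (-α)) = (t₀ - s) ^ (1 - α) / (1 - α) := by
    intro s hst
    have h1 : (∫ τ in s..t₀, (t₀ - τ) ^ (-α)) = ∫ x in (t₀ - t₀)..(t₀ - s), x ^ (-α) :=
      intervalIntegral.integral_comp_sub_left (fun x => x ^ (-α)) t₀
    rw [h1, sub_self, integral_rpow (Or.inl (by linarith))]
    rw [Real.zero_rpow (by linarith)]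
    rw [show -α + 1 = 1 - α by ring]
    ring
  -- key bound for each s < t₀
  have key : ∀ s : ℝ, 0 ≤ s → s < t₀ →
      (∫ τ in (0:ℝ)..t₀, f' τ * (t₀ - τ) ^ (-α)) ≤
        (C + C / (1 - α)) * (t₀ - s) ^ (1 - α) := by
    intro s hs0 hst
    have hts : 0 < t₀ - s := by linarith
    have hIccs : Icc (0:ℝ) s ⊆ Icc 0 T := Icc_subset_Icc le_rfl (by linarith)
    have huIcc : uIcc (0:ℝ) s = Icc 0 s := uIcc_of_le hs0
    -- split the integral
    have hsplit : (∫ τ in (0:ℝ)..s, f' τ * (t₀ - τ) ^ (-α)) +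
        (∫ τ in s..t₀, f' τ * (t₀ - τ) ^ (-α)) =
        ∫ τ in (0:ℝ)..t₀, f' τ * (t₀ - τ) ^ (-α) := by
      apply intervalIntegral.integral_add_adjacent_intervals
      · exact hg_int 0 s (by rw [huIcc]; exact Icc_subset_Icc le_rfl hst.le)
      · exact hg_int s t₀ (by rw [uIcc_of_le hst.le]; exact Icc_subset_Icc hs0 le_rfl)
    -- Part 1 : integration by parts on [0, s]
    have part1 : (∫ τ in (0:ℝ)..s, f' τ * (t₀ - τ) ^ (-α)) ≤ C * (t₀ - s) ^ (1 - α) := by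
      have hu : ∀ x ∈ uIcc (0:ℝ) s, HasDerivAt (fun τ => f τ - f t₀) (f' x) x := by
        intro x hx
        rw [huIcc] at hx
        exact (hderiv x (hIccs hx)).sub_const _
      have hv : ∀ x ∈ uIcc (0:ℝ) s,
          HasDerivAt (fun τ => (t₀ - τ) ^ (-α)) (α * (t₀ - x) ^ (-α - 1)) x := by
        intro x hx
        rw [huIcc] at hx
        have hpos : 0 < t₀ - x := by linarith [hx.2]
        have h1 : HasDerivAt (fun τ : ℝ => t₀ - τ) (-1) x := (hasDerivAt_id x).const_sub t₀
        have h2 := (Real.hasDerivAt_rpow_const (p := -α) (Or.inl hpos.ne')).comp x h1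
        exact h2.congr_deriv (by ring)
      have hu' : IntervalIntegrable f' volume 0 s :=
        (hf'.mono (by rw [huIcc]; exact hIccs)).intervalIntegrable
      have hvcont : ContinuousOn (fun x : ℝ => α * (t₀ - x) ^ (-α - 1)) (uIcc (0:ℝ) s) := by
        have hbase : ContinuousOn (fun x : ℝ => (t₀ - x) ^ (-α - 1)) (uIcc (0:ℝ) s) := by
          apply ContinuousOn.rpow_const (continuous_const.sub continuous_id).continuousOn
          intro x hx
          rw [huIcc] at hx
          exact Or.inl (by intro h; simp only [Pi.sub_apply, id] at h; linarith [hx.2])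
        exact continuousOn_const.mul hbase
      have hv' : IntervalIntegrable (fun x : ℝ => α * (t₀ - x) ^ (-α - 1)) volume 0 s :=
        hvcont.intervalIntegrable
      have hibp := intervalIntegral.integral_deriv_mul_eq_sub hu hv hu' hv'
      -- split the left side of IBP
      have hucont : ContinuousOn (fun τ => f τ - f t₀) (uIcc (0:ℝ) s) :=
        fun x hx => ((hu x hx).continuousAt).continuousWithinAt
      have hB_int : IntervalIntegrable
          (fun x => (f x - f t₀) * (α * (t₀ - x) ^ (-α - 1))) volume 0 s :=
        (hucont.mul hvcont).intervalIntegrable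
      have hA_int : IntervalIntegrable (fun τ => f' τ * (t₀ - τ) ^ (-α)) volume 0 s :=
        hg_int 0 s (by rw [huIcc]; exact Icc_subset_Icc le_rfl hst.le)
      rw [intervalIntegral.integral_add hA_int hB_int] at hibp
      -- the second integral is nonneg
      have hB_nonneg : 0 ≤ ∫ x in (0:ℝ)..s, (f x - f t₀) * (α * (t₀ - x) ^ (-α - 1)) := by
        apply intervalIntegral.integral_nonneg hs0
        intro x hx
        have h1 : 0 ≤ f x - f t₀ := sub_nonneg.2 (hmin x (hIccs hx))
        have h2 : 0 ≤ α * (t₀ - x) ^ (-α - 1) :=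
          mul_nonneg hα0.le (Real.rpow_nonneg (by linarith [hx.2]) _)
        exact mul_nonneg h1 h2
      -- boundary terms
      have hbd0 : 0 ≤ (f 0 - f t₀) * t₀ ^ (-α) :=
        mul_nonneg (sub_nonneg.2 (hmin 0 ⟨le_refl 0, hT.le⟩)) (Real.rpow_nonneg ht0.le _)
      -- mean value bound : f s - f t₀ ≤ C * (t₀ - s)
      have hmvt : f s - f t₀ ≤ C * (t₀ - s) := by
        have hfc : ContinuousOn f (Icc s t₀) := by
          intro x hx
          exact ((hderiv x ⟨le_trans hs0 hx.1, le_trans hx.2 htT⟩).continuousAt).continuousWithinAt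
        have hfd : ∀ x ∈ Ioo s t₀, HasDerivAt f (f' x) x := by
          intro x hx
          exact hderiv x ⟨le_trans hs0 hx.1.le, le_trans hx.2.le htT⟩
        obtain ⟨c, hc, hceq⟩ := exists_hasDerivAt_eq_slope f f' hst hfc hfd
        have hcmem : c ∈ Icc (0:ℝ) T := ⟨le_trans hs0 hc.1.le, le_trans hc.2.le htT⟩
        have : f t₀ - f s = f' c * (t₀ - s) := by
          rw [hceq]; field_simp
        have habs : -C ≤ f' c := neg_le_of_abs_le (hC c hcmem)
        nlinarith [hC c hcmem, abs_nonneg (f' c)]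
      have hbd1 : (f s - f t₀) * (t₀ - s) ^ (-α) ≤ C * (t₀ - s) ^ (1 - α) := by
        have h1 : (f s - f t₀) * (t₀ - s) ^ (-α) ≤ (C * (t₀ - s)) * (t₀ - s) ^ (-α) :=
          mul_le_mul_of_nonneg_right hmvt (Real.rpow_nonneg hts.le _)
        have h2 : (C * (t₀ - s)) * (t₀ - s) ^ (-α) = C * (t₀ - s) ^ (1 - α) := by
          rw [show (1:ℝ) - α = 1 + -α by ring, Real.rpow_add hts, Real.rpow_one]
          ring
        linarith
      -- combine
      have := hibp
      have heq : (∫ τ in (0:ℝ)..s, f' τ * (t₀ - τ) ^ (-α)) =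
          (f s - f t₀) * (t₀ - s) ^ (-α) - (f 0 - f t₀) * (t₀ - 0) ^ (-α) -
          ∫ x in (0:ℝ)..s, (f x - f t₀) * (α * (t₀ - x) ^ (-α - 1)) := by
        linarith [hibp]
      rw [heq, sub_zero]
      linarith
    -- Part 2 : tail bound on [s, t₀]
    have part2 : (∫ τ in s..t₀, f' τ * (t₀ - τ) ^ (-α)) ≤ C / (1 - α) * (t₀ - s) ^ (1 - α) := by
      have hmono : (∫ τ in s..t₀, f' τ * (t₀ - τ) ^ (-α)) ≤
          ∫ τ in s..t₀, C * (t₀ - τ) ^ (-α) := by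
        apply intervalIntegral.integral_mono_on hst.le
          (hg_int s t₀ (by rw [uIcc_of_le hst.le]; exact Icc_subset_Icc hs0 le_rfl))
          ((hint_h s t₀).const_mul C)
        intro τ hτ
        have hk : 0 ≤ (t₀ - τ) ^ (-α) := Real.rpow_nonneg (by linarith [hτ.2]) _
        apply mul_le_mul_of_nonneg_right _ hk
        exact le_trans (le_abs_self _) (hC τ ⟨le_trans hs0 hτ.1, le_trans hτ.2 htT⟩)
      rw [intervalIntegral.integral_const_mul, hker s hst] at hmono
      calc (∫ τ in s..t₀, f' τ * (t₀ - τ) ^ (-α)) ≤ C * ((t₀ - s) ^ (1 - α) / (1 - α)) := hmono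
        _ = C / (1 - α) * (t₀ - s) ^ (1 - α) := by ring
    linarith
  -- take the limit s → t₀⁻
  have hK0 : (0:ℝ) ≤ C + C / (1 - α) := by positivity
  have hlim : Tendsto (fun s : ℝ => (C + C / (1 - α)) * (t₀ - s) ^ (1 - α)) (nhdsWithin t₀ (Iio t₀))
      (nhds 0) := by
    have h1 : ContinuousAt (fun s : ℝ => (C + C / (1 - α)) * (t₀ - s) ^ (1 - α)) t₀ := by
      apply ContinuousAt.mul continuousAt_const
      apply ContinuousAt.rpow_const (continuousAt_const.sub continuousAt_id)
      exact Or.inr h1α.le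
    have h2 : Tendsto (fun s : ℝ => (C + C / (1 - α)) * (t₀ - s) ^ (1 - α))
        (nhdsWithin t₀ (Iio t₀)) (nhds ((C + C / (1 - α)) * (t₀ - t₀) ^ (1 - α))) :=
      h1.continuousWithinAt
    simpa [Real.zero_rpow h1α.ne'] using h2
  have hev : ∀ᶠ s in nhdsWithin t₀ (Iio t₀),
      (∫ τ in (0:ℝ)..t₀, f' τ * (t₀ - τ) ^ (-α)) ≤
        (C + C / (1 - α)) * (t₀ - s) ^ (1 - α) := by
    filter_upwards [Ioo_mem_nhdsLT_of_mem (⟨ht0, le_refl t₀⟩ : t₀ ∈ Ioc 0 t₀)] with s hs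
    exact key s hs.1.le hs.2
  have hint_le : (∫ τ in (0:ℝ)..t₀, f' τ * (t₀ - τ) ^ (-α)) ≤ 0 := ge_of_tendsto hlim hev
  have hΓ : 0 < Real.Gamma (1 - α) := Real.Gamma_pos_of_pos h1α
  have : 0 ≤ 1 / Real.Gamma (1 - α) := by positivity
  exact mul_nonpos_iff.2 (Or.inl ⟨this, hint_le⟩)
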